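/- Cremer parameters with small cycles form a residual set: there exists a dense Gδ subset A ⊆ ℝ such that every θ ∈ A is irrational and for every ε > 0 there exist an integer p ≥ 1 and a point w ∈ ℂ with w ≠ 0, |w| < ε and f_θ^p(w) = w (i.e. f_θ has a nonzero periodic point in every punctured neighborhood of its fixed point 0). -/

import Mathlib

open Polynomial

/-- In a nonempty multiset of nonnegative reals, some element to the power `card`
is at most the product. -/
lemma exists_mem_pow_card_le_prod (s : Multiset ℝ) (hs : s ≠ 0) (h0 : ∀ x ∈ s, 0 ≤ x) :
    ∃ m ∈ s, m ^ Multiset.card s ≤ s.prod := by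
  induction s using Multiset.induction with
  | empty => exact absurd rfl hs
  | cons a t ih =>
    have ha : 0 ≤ a := h0 a (Multiset.mem_cons_self a t)
    rcases eq_or_ne t 0 with rfl | ht
    · exact ⟨a, Multiset.mem_cons_self a 0, by simp⟩
    · obtain ⟨m, hm, hmp⟩ := ih ht (fun x hx => h0 x (Multiset.mem_cons_of_mem hx))
      have hm0 : 0 ≤ m := h0 m (Multiset.mem_cons_of_mem hm)
      rcases le_total a m with hle | hle
      · refine ⟨a, Multiset.mem_cons_self a t, ?_⟩
        rw [Multiset.card_cons, Multiset.prod_cons, pow_succ']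
        exact mul_le_mul_of_nonneg_left
          (le_trans (pow_le_pow_left₀ ha hle _) hmp) ha
      · refine ⟨m, Multiset.mem_cons_of_mem hm, ?_⟩
        rw [Multiset.card_cons, Multiset.prod_cons, pow_succ']
        exact mul_le_mul hle hmp (pow_nonneg hm0 _)
          (le_trans hm0 hle)

noncomputable def iterPoly (l : ℂ) : ℕ → Polynomial ℂ
  | 0 => Polynomial.X
  | n+1 => (Polynomial.X ^ 2 + Polynomial.C l * Polynomial.X).comp (iterPoly l n)

lemma iterPoly_eval (l : ℂ) (n : ℕ) (z : ℂ) :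
    (iterPoly l n).eval z = (fun z => l * z + z ^ 2)^[n] z := by
  induction n with
  | zero => simp [iterPoly]
  | succ n ih =>
    rw [iterPoly, eval_comp, ih, Function.iterate_succ_apply']
    simp only [eval_add, eval_pow, eval_mul, eval_C, eval_X]
    ring

lemma iterPoly_eval_zero (l : ℂ) (n : ℕ) : (iterPoly l n).eval 0 = 0 := by
  rw [iterPoly_eval]
  have h : (fun z : ℂ => l * z + z ^ 2) 0 = 0 := by norm_num
  exact Function.iterate_fixed (f := fun z : ℂ => l * z + z ^ 2) (x := (0:ℂ)) h n

lemma iterPoly_coeff_one (l : ℂ) (n : ℕ) : (iterPoly l n).coeff 1 = l ^ n := by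
  have key : ∀ m : ℕ, (derivative (iterPoly l m)).eval 0 = l ^ m := by
    intro m
    induction m with
    | zero => simp [iterPoly]
    | succ m ih =>
      rw [iterPoly, derivative_comp, eval_mul, eval_comp, iterPoly_eval_zero, ih]
      simp only [derivative_add, derivative_pow, derivative_mul, derivative_C, derivative_X,
        eval_add, eval_mul, eval_pow, eval_C, eval_X, eval_one]
      ring
  have := key n
  rw [← coeff_zero_eq_eval_zero, coeff_derivative] at this
  norm_num at this
  exact this

lemma iterPoly_monic (l : ℂ) (n : ℕ) :
    (iterPoly l n).Monic ∧ (iterPoly l n).natDegree = 2 ^ n := by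
  have hP : (Polynomial.X ^ 2 + Polynomial.C l * Polynomial.X : Polynomial ℂ).Monic := by
    apply Polynomial.monic_X_pow_add
    exact lt_of_le_of_lt (Polynomial.degree_C_mul_X_le l) (by norm_num)
  have hPd : (Polynomial.X ^ 2 + Polynomial.C l * Polynomial.X : Polynomial ℂ).natDegree = 2 := by
    compute_degree!
  induction n with
  | zero => exact ⟨monic_X, natDegree_X⟩
  | succ n ih =>
    obtain ⟨hm, hd⟩ := ih
    have hnd : (iterPoly l n).natDegree ≠ 0 := by
      rw [hd]; positivity
    refine ⟨hP.comp hm hnd, ?_⟩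
    rw [iterPoly, natDegree_comp, hPd, hd, pow_succ, mul_comm]

lemma exists_small_cycle (l : ℂ) (q : ℕ) (hq : 1 ≤ q) (hl : l ^ q ≠ 1) :
    ∃ w : ℂ, w ≠ 0 ∧ ‖w‖ ^ (2 ^ q - 1) ≤ ‖l ^ q - 1‖ ∧
      (fun z => l * z + z ^ 2)^[q] w = w := by
  obtain ⟨hm, hd⟩ := iterPoly_monic l q
  set Q : Polynomial ℂ := iterPoly l q - Polynomial.X with hQdef
  have h2q : (2:ℕ) ≤ 2 ^ q := by
    calc (2:ℕ) = 2 ^ 1 := by ring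
    _ ≤ 2 ^ q := Nat.pow_le_pow_right (by norm_num) hq
  have hdegX : (Polynomial.X : Polynomial ℂ).degree < (iterPoly l q).degree := by
    rw [degree_X, Polynomial.degree_eq_natDegree hm.ne_zero, hd]
    exact_mod_cast lt_of_lt_of_le (by norm_num) h2q
  have hQm : Q.Monic := by
    rw [hQdef, sub_eq_add_neg]
    exact hm.add_of_left (by rwa [degree_neg])
  have hQdeg : Q.natDegree = 2 ^ q := by
    have : Q.degree = (iterPoly l q).degree := by
      rw [hQdef, sub_eq_add_neg]
      exact degree_add_eq_left_of_degree_lt (by rwa [degree_neg])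
    rw [natDegree_eq_of_degree_eq this, hd]
  have hQ0 : Q.eval 0 = 0 := by
    rw [hQdef, eval_sub, iterPoly_eval_zero, eval_X, sub_zero]
  have hQc1 : Q.coeff 1 = l ^ q - 1 := by
    rw [hQdef, coeff_sub, iterPoly_coeff_one, coeff_X_one]
  have hc1ne : l ^ q - 1 ≠ 0 := sub_ne_zero.mpr hl
  obtain ⟨h, hQh⟩ : Polynomial.X ∣ Q := X_dvd_iff.mpr (by rwa [coeff_zero_eq_eval_zero])
  have hh0 : h.eval 0 = l ^ q - 1 := by
    rw [← coeff_zero_eq_eval_zero, ← hQc1, hQh, coeff_X_mul]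
  have hhne : h ≠ 0 := by
    intro hz; rw [hz, eval_zero] at hh0; exact hc1ne hh0.symm
  have hhm : h.Monic := by
    have := hQm
    rw [Monic, hQh, leadingCoeff_mul, leadingCoeff_X, one_mul] at this
    exact this
  have hhd : h.natDegree = 2 ^ q - 1 := by
    have : Q.natDegree = 1 + h.natDegree := by
      rw [hQh, natDegree_mul X_ne_zero hhne, natDegree_X]
    omega
  have hsplit : Polynomial.Splits h := IsAlgClosed.splits h
  have hcard : Multiset.card h.roots = 2 ^ q - 1 := by
    rw [splits_iff_card_roots.mp hsplit, hhd]
  -- product of absolute values of roots equals |l^q - 1|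
  have hprod : ((h.roots.map (fun a : ℂ => ‖a‖)).prod : ℝ) = ‖l ^ q - 1‖ := by
    have h1 : h = (h.roots.map fun a => Polynomial.X - Polynomial.C a).prod :=
      hsplit.eq_prod_roots_of_monic hhm
    have h2 : h.eval 0 = (h.roots.map fun a => -a).prod := by
      conv_lhs => rw [h1]
      rw [eval_multiset_prod, Multiset.map_map]
      congr 1
      apply Multiset.map_congr rfl
      intro a _
      simp
    rw [← hh0, h2, show ‖(Multiset.map (fun a => -a) h.roots).prod‖ = ((Multiset.map (fun a => -a) h.roots).map (fun x : ℂ => ‖x‖)).prod from map_multiset_prod (normHom : ℂ →*₀ ℝ) _, Multiset.map_map]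
    congr 1
    apply Multiset.map_congr rfl
    intro a _
    simp
  -- pick root of minimal modulus
  have hsne : h.roots.map (fun a : ℂ => ‖a‖) ≠ 0 := by
    intro hz
    have := congrArg Multiset.card hz
    rw [Multiset.card_map, hcard] at this
    simp at this
    omega
  obtain ⟨m, hmmem, hmle⟩ := exists_mem_pow_card_le_prod (h.roots.map (fun a : ℂ => ‖a‖)) hsne
    (by intro x hx; obtain ⟨a, _, rfl⟩ := Multiset.mem_map.mp hx; exact norm_nonneg a)
  obtain ⟨w, hwroot, rfl⟩ := Multiset.mem_map.mp hmmem
  have hwr : h.IsRoot w := isRoot_of_mem_roots hwroot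
  have hwne : w ≠ 0 := by
    intro hz; rw [hz] at hwr
    exact hc1ne (by rw [← hh0, hwr.eq_zero])
  refine ⟨w, hwne, ?_, ?_⟩
  · rw [Multiset.card_map, hcard] at hmle
    rwa [hprod] at hmle
  · have hQw : Q.eval w = 0 := by rw [hQh, eval_mul, hwr.eq_zero, mul_zero]
    rw [hQdef, eval_sub, eval_X, sub_eq_zero] at hQw
    rw [← iterPoly_eval, hQw]

/-- The quadratic polynomial `f_θ(z) = e^{2πiθ} z + z²`. -/
noncomputable def fTheta (θ : ℝ) (z : ℂ) : ℂ :=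
  Complex.exp (2 * Real.pi * Complex.I * θ) * z + z ^ 2

lemma fTheta_eq (θ : ℝ) :
    fTheta θ = fun z => Complex.exp (2 * Real.pi * Complex.I * θ) * z + z ^ 2 := rfl

noncomputable def lamPow (θ : ℝ) (q : ℕ) : ℝ :=
  ‖Complex.exp (2 * Real.pi * Complex.I * θ) ^ q - 1‖

lemma continuous_lamPow (q : ℕ) : Continuous fun θ => lamPow θ q := by
  unfold lamPow
  apply continuous_norm.comp
  apply Continuous.sub _ continuous_const
  apply Continuous.pow
  exact Complex.continuous_exp.comp (by continuity)

/-- The open set in the liminf construction. -/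
def liouU (n : ℕ) : Set ℝ :=
  ⋃ q ∈ Set.Ici (n + 1), {θ : ℝ | lamPow θ q < (1 / (n + 1 : ℝ)) ^ (2 ^ q)}

lemma liouU_isOpen (n : ℕ) : IsOpen (liouU n) := by
  apply isOpen_biUnion
  intro q _
  exact isOpen_lt (continuous_lamPow q) continuous_const

lemma rat_mem_liouU (n : ℕ) (r : ℚ) : (r : ℝ) ∈ liouU n := by
  refine Set.mem_biUnion (show (n+1) * r.den ∈ Set.Ici (n+1) from ?_) ?_
  · exact Nat.le_mul_of_pos_right _ r.pos
  · show lamPow (r : ℝ) ((n+1) * r.den) < (1 / (n + 1 : ℝ)) ^ (2 ^ ((n+1) * r.den))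
    have h1 : Complex.exp (2 * Real.pi * Complex.I * (r : ℝ)) ^ ((n+1) * r.den) = 1 := by
      rw [← Complex.exp_nat_mul]
      have hden : (r.den : ℂ) ≠ 0 := Nat.cast_ne_zero.mpr r.den_nz
      have key : (((n+1) * r.den : ℕ) : ℂ) * (2 * Real.pi * Complex.I * (r : ℝ)) =
          ((r.num * (n+1) : ℤ) : ℂ) * (2 * Real.pi * Complex.I) := by
        have hr : ((r : ℝ) : ℂ) = (r.num : ℂ) / (r.den : ℂ) := by
          push_cast
          rw [Rat.cast_def]
        rw [hr]
        push_cast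
        field_simp
      rw [key, Complex.exp_int_mul_two_pi_mul_I]
    rw [lamPow, h1, sub_self, norm_zero]
    positivity

lemma liouU_dense (n : ℕ) : Dense (liouU n) := by
  apply Rat.denseRange_cast.mono
  rintro x ⟨r, rfl⟩
  exact rat_mem_liouU n r

lemma pow_ne_one_of_irrational {θ : ℝ} (hirr : Irrational θ) {q : ℕ} (hq : 1 ≤ q) :
    Complex.exp (2 * Real.pi * Complex.I * θ) ^ q ≠ 1 := by
  intro hone
  rw [← Complex.exp_nat_mul, Complex.exp_eq_one_iff] at hone
  obtain ⟨k, hk⟩ := hone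
  have h2 : (2 * Real.pi * Complex.I) ≠ 0 := by
    simp [Complex.I_ne_zero, Real.pi_ne_zero]
  have hθq : (q : ℂ) * θ = k := by
    have : (q : ℂ) * θ * (2 * Real.pi * Complex.I) = k * (2 * Real.pi * Complex.I) := by
      rw [← hk]; ring
    exact mul_right_cancel₀ h2 this
  have hreal : (q : ℝ) * θ = k := by
    exact_mod_cast hθq
  have hqne : (q : ℝ) ≠ 0 := by positivity
  apply hirr
  refine ⟨(k : ℚ) / (q : ℚ), ?_⟩
  push_cast
  field_simp
  linarith [hreal]

/-- There is a dense Gδ set of irrational parameters `θ` for which `f_θ` has a nonzero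
periodic point in every punctured neighborhood of its fixed point `0` (small cycles). -/
theorem residual_set_of_small_cycle_parameters :
    ∃ A : Set ℝ, Dense A ∧ IsGδ A ∧
      ∀ θ ∈ A, Irrational θ ∧
        ∀ ε > 0, ∃ p : ℕ, 1 ≤ p ∧
          ∃ w : ℂ, w ≠ 0 ∧ ‖w‖ < ε ∧ (fTheta θ)^[p] w = w := by
  have hGδ : IsGδ ({θ : ℝ | Irrational θ} ∩ ⋂ n, liouU n) :=
    IsGδ.inter .setOf_irrational (.iInter fun n => (liouU_isOpen n).isGδ)
  refine ⟨{θ : ℝ | Irrational θ} ∩ ⋂ n, liouU n, ?_, hGδ, ?_⟩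
  · exact Dense.inter_of_Gδ .setOf_irrational (.iInter fun n => (liouU_isOpen n).isGδ)
      dense_irrational (dense_iInter_of_isOpen liouU_isOpen liouU_dense)
  · rintro θ ⟨hirr, hU⟩
    refine ⟨hirr, ?_⟩
    intro ε hε
    obtain ⟨n, hn⟩ := exists_nat_one_div_lt hε
    have hθn : θ ∈ liouU n := Set.mem_iInter.mp hU n
    obtain ⟨q, hqmem, hqsmall⟩ := Set.mem_iUnion₂.mp hθn
    have hq1 : 1 ≤ q := le_trans (Nat.le_add_left 1 n) hqmem
    have hl := pow_ne_one_of_irrational hirr hq1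
    obtain ⟨w, hw0, hwle, hwfix⟩ :=
      exists_small_cycle (Complex.exp (2 * Real.pi * Complex.I * θ)) q hq1 hl
    set c : ℝ := 1 / (n + 1 : ℝ) with hc
    have hc0 : 0 ≤ c := by positivity
    have hc1 : c ≤ 1 := by
      rw [hc, div_le_one (by positivity)]
      linarith [Nat.cast_nonneg (α := ℝ) n]
    have h2q : 2 ≤ 2 ^ q := by
      calc (2:ℕ) = 2 ^ 1 := by ring
      _ ≤ 2 ^ q := Nat.pow_le_pow_right (by norm_num) hq1
    set N : ℕ := 2 ^ q - 1 with hN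
    have hNsucc : 2 ^ q = N + 1 := by omega
    have hNne : N ≠ 0 := by omega
    have hchain : ‖w‖ ^ N ≤ c ^ N := by
      calc ‖w‖ ^ N ≤ lamPow θ q := hwle
      _ ≤ c ^ (2 ^ q) := le_of_lt hqsmall
      _ = c ^ (N + 1) := by rw [hNsucc]
      _ ≤ c ^ N := pow_le_pow_of_le_one hc0 hc1 (by omega)
    have habs : ‖w‖ ≤ c := le_of_pow_le_pow_left₀ hNne hc0 hchain
    refine ⟨q, hq1, w, hw0, lt_of_le_of_lt habs hn, ?_⟩
    rw [fTheta_eq]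
    exact hwfix
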